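/- Let A = [[a,b],[c,d]] ∈ SL(2,ℤ) with a ≡ 1 (mod m) and gcd(a, n) ≠ 1, where m, n are positive integers with m | n. Then there exists an integer k such that a + bmk is a prime number larger than n; in particular the upper-left entry of A·[[1,0],[mk,1]] is coprime to n. -/

import Mathlib

theorem exists_k_prime_upper_left (m n : ℕ) (hm : 0 < m) (hn : 0 < n) (hmn : m ∣ n)
    (a b c d : ℤ) (hdet : a * d - b * c = 1)
    (ha1 : a ≡ 1 [ZMOD m]) (han : ¬ IsCoprime a (n : ℤ)) :
    ∃ k : ℤ, Prime (a + b * (m : ℤ) * k) ∧ (n : ℤ) < a + b * (m : ℤ) * k ∧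
      IsCoprime (a + b * (m : ℤ) * k) (n : ℤ) := by
  -- b ≠ 0
  have hb : b ≠ 0 := by
    rintro rfl
    exact han ⟨d, 0, by linarith⟩
  -- a coprime to b
  have hab : IsCoprime a b := ⟨d, -c, by linarith⟩
  -- a coprime to m
  have ham : IsCoprime a (m : ℤ) := by
    obtain ⟨t, ht⟩ := Int.ModEq.dvd ha1
    exact ⟨1, t, by linarith⟩
  have habm : IsCoprime a (b * (m : ℤ)) := hab.mul_right ham
  set q : ℕ := (b * (m : ℤ)).natAbs with hq
  have hq0 : q ≠ 0 := by
    simp [hq, hb, hm.ne']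
  haveI : NeZero q := ⟨hq0⟩
  -- a is a unit mod q
  have haq : IsCoprime a (q : ℤ) := by
    rw [Int.isCoprime_iff_gcd_eq_one] at habm ⊢
    simpa only [Int.gcd, Int.natAbs_natCast, hq] using habm
  obtain ⟨u, v, huv⟩ := haq
  have hunit : IsUnit ((a : ZMod q)) := by
    apply IsUnit.of_mul_eq_one ((u : ZMod q))
    have : ((u * a + v * q : ℤ) : ZMod q) = 1 := by rw [huv]; simp
    push_cast at this
    simpa [ZMod.natCast_self, mul_comm] using this
  obtain ⟨p, hpn, hp, hpa⟩ := Nat.forall_exists_prime_gt_and_eq_mod hunit n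
  -- q ∣ p - a in ℤ
  have hdvd : (q : ℤ) ∣ (p : ℤ) - a := by
    rw [← ZMod.intCast_zmod_eq_zero_iff_dvd]
    push_cast
    rw [hpa]
    ring
  have hdvd' : b * (m : ℤ) ∣ (p : ℤ) - a := by
    rwa [hq, Int.natAbs_dvd] at hdvd
  obtain ⟨k, hk⟩ := hdvd'
  have hpe : a + b * (m : ℤ) * k = (p : ℤ) := by linarith
  refine ⟨k, ?_, ?_, ?_⟩
  · rw [hpe]; exact Nat.prime_iff_prime_int.mp hp
  · rw [hpe]; exact_mod_cast hpn
  · rw [hpe, Nat.isCoprime_iff_coprime]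
    exact (hp.coprime_iff_not_dvd.mpr (Nat.not_dvd_of_pos_of_lt hn hpn))
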